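/- Let G be a group and let (Y_j)_{j∈J} be a (possibly infinite) family of G-boundaries. Then the product ∏_{j∈J} Y_j, equipped with the product topology and the diagonal G-action, is strongly proximal: for every Radon probability measure μ on ∏_{j∈J} Y_j there exists a point y in the product such that the Dirac measure δ_y lies in the weak-* closure of the orbit {g·μ : g ∈ G}. -/

import Mathlib

open MeasureTheory

/-- The Dirac probability measure at a point. -/
noncomputable def diracProb {X : Type*} [MeasurableSpace X] (x : X) :
    ProbabilityMeasure X :=
  ⟨Measure.dirac x, inferInstance⟩

/-- The pushforward action of a group element on probability measures:
`(g • μ)(E) = μ (g⁻¹ • E)`. -/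
noncomputable def pushforwardProb {G X : Type*} [Group G] [TopologicalSpace X]
    [MeasurableSpace X] [BorelSpace X] [MulAction G X] [ContinuousConstSMul G X]
    (g : G) (μ : ProbabilityMeasure X) : ProbabilityMeasure X :=
  μ.map (f := fun x => g • x) ((continuous_const_smul g).measurable.aemeasurable)

/-- The action of `G` on `X` is minimal if every orbit is dense. -/
def IsMinimalAction (G X : Type*) [Group G] [TopologicalSpace X] [MulAction G X] : Prop :=
  ∀ x : X, Dense (MulAction.orbit G x)

/-- The action of `G` on `X` is strongly proximal if the weak-* closure of the orbit of every
probability measure on `X` contains a Dirac measure. -/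
def IsStronglyProximal (G X : Type*) [Group G] [TopologicalSpace X] [MeasurableSpace X]
    [BorelSpace X] [MulAction G X] [ContinuousConstSMul G X] : Prop :=
  ∀ μ : ProbabilityMeasure X, ∃ x : X,
    diracProb x ∈ closure {ν | ∃ g : G, ν = pushforwardProb g μ}

open BoundedContinuousFunction NNReal ENNReal Set TopologicalSpace Topology
set_option linter.unusedSectionVars false

namespace SPP

variable {Z : Type*} [TopologicalSpace Z] [MeasurableSpace Z] [BorelSpace Z]

noncomputable def tst (μ : ProbabilityMeasure Z) : (Z →ᵇ ℝ≥0) → ℝ≥0 :=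
  fun f => μ.toFiniteMeasure.testAgainstNN f

lemma inducing_tst : IsInducing (tst (Z := Z)) := by
  have h1 : IsInducing (ProbabilityMeasure.toFiniteMeasure (Ω := Z)) := ⟨rfl⟩
  have h2 : IsInducing (FiniteMeasure.toWeakDualBCNN (Ω := Z)) := ⟨rfl⟩
  have h3 : IsInducing (fun (ψ : WeakDual ℝ≥0 (Z →ᵇ ℝ≥0)) (f : Z →ᵇ ℝ≥0) => ψ f) := ⟨rfl⟩
  exact (h3.comp h2).comp h1

lemma tst_apply (μ : ProbabilityMeasure Z) (f : Z →ᵇ ℝ≥0) :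
    tst μ f = (∫⁻ z, (f z : ℝ≥0∞) ∂(μ : Measure Z)).toNNReal := rfl

lemma tst_dirac (x : Z) : tst (diracProb x) = fun f => f x := by
  funext f
  rw [tst_apply]
  have h : (diracProb x : Measure Z) = Measure.dirac x := rfl
  rw [h, lintegral_dirac' x
    (f := fun a => ((f a : ℝ≥0∞)))
    (measurable_coe_nnreal_ennreal.comp f.continuous.measurable)]
  simp

variable {Z' : Type*} [TopologicalSpace Z'] [MeasurableSpace Z'] [BorelSpace Z']

/-- test a pushforward -/
lemma tst_map (μ : ProbabilityMeasure Z) (h : C(Z, Z')) (f : Z' →ᵇ ℝ≥0) :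
    tst (μ.map h.continuous.measurable.aemeasurable) f = tst μ (f.compContinuous h) := by
  rw [tst_apply, tst_apply]
  congr 1
  rw [ProbabilityMeasure.toMeasure_map]
  rw [lintegral_map (f := fun a => ((f a : ℝ≥0∞)))
    (measurable_coe_nnreal_ennreal.comp f.continuous.measurable)
    h.continuous.measurable]
  rfl

/-- the "composition operator" on the functional side -/
def compW (h : C(Z, Z')) (φ : (Z →ᵇ ℝ≥0) → ℝ≥0) : (Z' →ᵇ ℝ≥0) → ℝ≥0 :=
  fun f => φ (f.compContinuous h)

lemma continuous_compW (h : C(Z, Z')) : Continuous (compW h) :=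
  continuous_pi fun f => continuous_apply (f.compContinuous h)

lemma compW_tst (h : C(Z, Z')) (μ : ProbabilityMeasure Z) :
    compW h (tst μ) = tst (μ.map h.continuous.measurable.aemeasurable) := by
  funext f; exact (tst_map μ h f).symm

/-- the Dirac functional -/
def diracFn (x : Z) : (Z →ᵇ ℝ≥0) → ℝ≥0 := fun f => f x

lemma continuous_diracFn : Continuous (diracFn (Z := Z)) :=
  continuous_pi fun f => f.continuous

lemma compW_diracFn (h : C(Z, Z')) (x : Z) : compW h (diracFn x) = diracFn (h x) := rfl

/-- states: the closed set of normalized positive additive functionals -/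
def IsState (φ : (Z →ᵇ ℝ≥0) → ℝ≥0) : Prop :=
  (∀ f g : Z →ᵇ ℝ≥0, φ (f + g) = φ f + φ g) ∧
  (∀ (c : ℝ≥0) (f : Z →ᵇ ℝ≥0), φ (c • f) = c * φ f) ∧
  φ 1 = 1 ∧
  (∀ f g : Z →ᵇ ℝ≥0, (∀ z, f z ≤ g z) → φ f ≤ φ g)

lemma isClosed_isState : IsClosed {φ : (Z →ᵇ ℝ≥0) → ℝ≥0 | IsState φ} := by
  have h1 : IsClosed {φ : (Z →ᵇ ℝ≥0) → ℝ≥0 | ∀ f g : Z →ᵇ ℝ≥0, φ (f + g) = φ f + φ g} := by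
    rw [setOf_forall]
    refine isClosed_iInter fun f => ?_
    rw [setOf_forall]
    exact isClosed_iInter fun g =>
      isClosed_eq (continuous_apply _) ((continuous_apply f).add (continuous_apply g))
  have h2 : IsClosed {φ : (Z →ᵇ ℝ≥0) → ℝ≥0 | ∀ (c : ℝ≥0) (f : Z →ᵇ ℝ≥0), φ (c • f) = c * φ f} := by
    rw [setOf_forall]
    refine isClosed_iInter fun c => ?_
    rw [setOf_forall]
    exact isClosed_iInter fun f =>
      isClosed_eq (continuous_apply _) ((continuous_apply f).const_smul c)
  have h3 : IsClosed {φ : (Z →ᵇ ℝ≥0) → ℝ≥0 | φ 1 = 1} :=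
    isClosed_eq (continuous_apply _) continuous_const
  have h4 : IsClosed {φ : (Z →ᵇ ℝ≥0) → ℝ≥0 |
      ∀ f g : Z →ᵇ ℝ≥0, (∀ z, f z ≤ g z) → φ f ≤ φ g} := by
    rw [setOf_forall]
    refine isClosed_iInter fun f => ?_
    rw [setOf_forall]
    refine isClosed_iInter fun g => ?_
    by_cases h : ∀ z, f z ≤ g z
    · have he : {φ : (Z →ᵇ ℝ≥0) → ℝ≥0 | (∀ z, f z ≤ g z) → φ f ≤ φ g}
          = {φ : (Z →ᵇ ℝ≥0) → ℝ≥0 | φ f ≤ φ g} := by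
        ext φ; simp [h]
      rw [he]; exact isClosed_le (continuous_apply f) (continuous_apply g)
    · have he : {φ : (Z →ᵇ ℝ≥0) → ℝ≥0 | (∀ z, f z ≤ g z) → φ f ≤ φ g} = univ := by
        ext φ; simp [h]
      rw [he]; exact isClosed_univ
  unfold IsState
  simp only [setOf_and]
  exact h1.inter (h2.inter (h3.inter h4))

lemma isState_tst (μ : ProbabilityMeasure Z) : IsState (tst μ) := by
  refine ⟨fun f g => μ.toFiniteMeasure.testAgainstNN_add f g,
    fun c f => ?_, ?_, fun f g hfg => μ.toFiniteMeasure.testAgainstNN_mono hfg⟩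
  · have := μ.toFiniteMeasure.testAgainstNN_smul (c := c) (f := f)
    simpa [smul_eq_mul, tst] using this
  · have h1 : (1 : Z →ᵇ ℝ≥0) = BoundedContinuousFunction.const Z (1 : ℝ≥0) := rfl
    show μ.toFiniteMeasure.testAgainstNN 1 = 1
    rw [h1, μ.toFiniteMeasure.testAgainstNN_const]
    simp [μ.mass_toFiniteMeasure]

/-- states evaluate constants to the constant -/
lemma IsState.const {φ : (Z →ᵇ ℝ≥0) → ℝ≥0} (hφ : IsState φ) (c : ℝ≥0) :
    φ (BoundedContinuousFunction.const Z c) = c := by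
  have h : BoundedContinuousFunction.const Z c = c • (1 : Z →ᵇ ℝ≥0) := by
    ext z; simp
  rw [h, hφ.2.1 c 1, hφ.2.2.1, mul_one]

lemma IsState.finsum {φ : (Z →ᵇ ℝ≥0) → ℝ≥0} (hφ : IsState φ) {ι : Type*} (s : Finset ι)
    (F : ι → (Z →ᵇ ℝ≥0)) : φ (∑ i ∈ s, F i) = ∑ i ∈ s, φ (F i) := by
  classical
  induction s using Finset.induction_on with
  | empty =>
    simp only [Finset.sum_empty]
    have h0 : (0 : Z →ᵇ ℝ≥0) = (0 : ℝ≥0) • (1 : Z →ᵇ ℝ≥0) := by ext z; simp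
    rw [h0, hφ.2.1, zero_mul]
  | insert _ _ hi ih =>
    rw [Finset.sum_insert hi, Finset.sum_insert hi, hφ.1, ih]

/-- a canonical upper bound for a bounded ℝ≥0-valued function -/
lemma exists_forall_le (f : Z →ᵇ ℝ≥0) : ∃ C : ℝ≥0, ∀ z, f z ≤ C := by
  obtain ⟨C, hC⟩ := f.map_bounded'
  rcases isEmpty_or_nonempty Z with hZ | ⟨⟨z₀⟩⟩
  · exact ⟨0, fun z => (IsEmpty.false z).elim⟩
  · refine ⟨f z₀ + Real.toNNReal C, fun z => ?_⟩
    have := hC z z₀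
    rw [NNReal.dist_eq] at this
    have h2 : (f z : ℝ) ≤ (f z₀ : ℝ) + C := by
      have h' := (abs_sub_le_iff.1 this).1
      have h'' : (f z : ℝ) - (f z₀ : ℝ) ≤ C := h'
      linarith
    have h3 : (f z : ℝ) ≤ ((f z₀ + Real.toNNReal C : ℝ≥0) : ℝ) := by
      push_cast
      exact h2.trans (add_le_add_right (Real.le_coe_toNNReal C) _)
    exact_mod_cast h3

noncomputable def bnd (f : Z →ᵇ ℝ≥0) : ℝ≥0 := (exists_forall_le f).choose

lemma le_bnd (f : Z →ᵇ ℝ≥0) (z : Z) : f z ≤ bnd f := (exists_forall_le f).choose_spec z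

lemma IsState.apply_le_bnd {φ : (Z →ᵇ ℝ≥0) → ℝ≥0} (hφ : IsState φ) (f : Z →ᵇ ℝ≥0) :
    φ f ≤ bnd f := by
  have := hφ.2.2.2 f (BoundedContinuousFunction.const Z (bnd f)) (fun z => le_bnd f z)
  rwa [hφ.const] at this

/-- the compact box -/
lemma isCompact_box : IsCompact {φ : (Z →ᵇ ℝ≥0) → ℝ≥0 | ∀ f, φ f ∈ Icc 0 (bnd f)} := by
  have : {φ : (Z →ᵇ ℝ≥0) → ℝ≥0 | ∀ f, φ f ∈ Icc 0 (bnd f)}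
      = Set.pi univ (fun f => Icc 0 (bnd f)) := by
    ext φ
    exact ⟨fun h f _ => h f, fun h f => h f trivial⟩
  rw [this]
  exact isCompact_univ_pi fun f => isCompact_Icc

lemma isCompact_diracSet [CompactSpace Z] : IsCompact (range (diracFn (Z := Z))) :=
  isCompact_range continuous_diracFn

lemma isClosed_diracSet [CompactSpace Z] : IsClosed (range (diracFn (Z := Z))) :=
  isCompact_diracSet.isClosed

section Dyn

variable {G : Type*} [Group G] [MulAction G Z] [ContinuousConstSMul G Z]

/-- scalar action as a continuous map -/
def smulCM (G : Type*) [Group G] [MulAction G Z] [ContinuousConstSMul G Z] (g : G) : C(Z, Z) :=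
  ⟨fun z => g • z, continuous_const_smul g⟩

lemma tst_push (g : G) (μ : ProbabilityMeasure Z) :
    tst (pushforwardProb g μ) = compW (smulCM G g) (tst μ) :=
  (compW_tst (smulCM G g) μ).symm

/-- the orbit of a functional -/
def orbW (G : Type*) [Group G] [MulAction G Z] [ContinuousConstSMul G Z]
    (φ : (Z →ᵇ ℝ≥0) → ℝ≥0) : Set ((Z →ᵇ ℝ≥0) → ℝ≥0) :=
  {ψ | ∃ g : G, ψ = compW (smulCM G g) φ}

lemma compW_smul_comp (g g' : G) (φ : (Z →ᵇ ℝ≥0) → ℝ≥0) :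
    compW (smulCM G g) (compW (smulCM G g') φ) = compW (smulCM G (g * g')) φ := by
  funext f
  show φ ((f.compContinuous (smulCM G g)).compContinuous (smulCM G g'))
    = φ (f.compContinuous (smulCM G (g * g')))
  congr 1
  ext z
  simp [smulCM, mul_smul]

lemma compW_smul_one (φ : (Z →ᵇ ℝ≥0) → ℝ≥0) : compW (smulCM G (1 : G)) φ = φ := by
  funext f
  show φ (f.compContinuous (smulCM G (1 : G))) = φ f
  congr 1
  ext z
  simp [smulCM]

lemma orbW_maps (g : G) (φ : (Z →ᵇ ℝ≥0) → ℝ≥0) :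
    MapsTo (compW (smulCM G g)) (orbW G φ) (orbW G φ) := by
  rintro _ ⟨g', rfl⟩
  exact ⟨g * g', compW_smul_comp g g' φ⟩

lemma closure_orbW_maps (g : G) (φ : (Z →ᵇ ℝ≥0) → ℝ≥0) :
    MapsTo (compW (smulCM G g)) (closure (orbW G φ)) (closure (orbW G φ)) := by
  intro ψ hψ
  exact map_mem_closure (continuous_compW _) hψ (orbW_maps g φ)

/-- in a boundary, every Dirac functional is in the closure of the orbit of every measure -/
lemma diracFn_mem_closure_orbW [CompactSpace Z] [T2Space Z]
    (hmin : IsMinimalAction G Z) (hprox : IsStronglyProximal G Z)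
    (ν : ProbabilityMeasure Z) (x : Z) :
    diracFn x ∈ closure (orbW G (tst ν)) := by
  obtain ⟨x₀, hx₀⟩ := hprox ν
  have hmapsto : MapsTo tst {ν' | ∃ g : G, ν' = pushforwardProb g ν} (orbW G (tst ν)) := by
    rintro _ ⟨g, rfl⟩
    exact ⟨g, tst_push g ν⟩
  have h1 : diracFn x₀ ∈ closure (orbW G (tst ν)) := by
    have := map_mem_closure inducing_tst.continuous hx₀ hmapsto
    rwa [tst_dirac] at this
  have h2 : ∀ g : G, diracFn (g • x₀) ∈ closure (orbW G (tst ν)) := fun g => by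
    have := closure_orbW_maps g (tst ν) h1
    rwa [compW_diracFn] at this
  have h3 : x ∈ closure (MulAction.orbit G x₀) := hmin x₀ x
  have h4 : MapsTo diracFn (MulAction.orbit G x₀) (closure (orbW G (tst ν))) := by
    rintro _ ⟨g, rfl⟩
    exact h2 g
  have := map_mem_closure continuous_diracFn h3 h4
  rwa [closure_closure] at this

end Dyn


/-- compW pushes states to states -/
lemma IsState.compW_state {φ : (Z →ᵇ ℝ≥0) → ℝ≥0} (hφ : IsState φ) (h : C(Z, Z')) :
    IsState (compW h φ) := by
  refine ⟨fun f g => ?_, fun c f => ?_, ?_, fun f g hfg => ?_⟩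
  · have he : (f + g).compContinuous h = f.compContinuous h + g.compContinuous h := by
      ext z; simp
    show φ ((f + g).compContinuous h) = _
    rw [he, hφ.1]; rfl
  · have he : (c • f).compContinuous h = c • (f.compContinuous h) := by
      ext z; simp
    show φ ((c • f).compContinuous h) = _
    rw [he, hφ.2.1]; rfl
  · have he : (1 : Z' →ᵇ ℝ≥0).compContinuous h = 1 := by
      ext z; simp
    show φ ((1 : Z' →ᵇ ℝ≥0).compContinuous h) = 1
    rw [he, hφ.2.2.1]
  · exact hφ.2.2.2 _ _ fun z => hfg (h z)

/-- helper to build bounded continuous ℝ≥0-valued functions -/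
def mkBC (g : C(Z, ℝ≥0)) (C : ℝ≥0) (hC : ∀ z, g z ≤ C) : Z →ᵇ ℝ≥0 :=
  ⟨g, ⟨C, fun z w => by
    rw [NNReal.dist_eq]
    rw [abs_sub_le_iff]
    constructor
    · have h1 : (g.toFun z : ℝ) ≤ C := hC z
      have h2 : (0 : ℝ) ≤ g.toFun w := (g.toFun w).coe_nonneg
      linarith
    · have h1 : (g.toFun w : ℝ) ≤ C := hC w
      have h2 : (0 : ℝ) ≤ g.toFun z := (g.toFun z).coe_nonneg
      linarith⟩⟩

@[simp] lemma mkBC_apply (g : C(Z, ℝ≥0)) (C : ℝ≥0) (hC : ∀ z, g z ≤ C) (z : Z) :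
    mkBC g C hC z = g z := rfl

/-- Urysohn for ℝ≥0: 1 on a closed set, 0 at a point not in it -/
lemma exists_urysohn_nn [CompactSpace Z] [T2Space Z] (C : Set Z) (hC : IsClosed C)
    (x : Z) (hx : x ∉ C) :
    ∃ u : Z →ᵇ ℝ≥0, (∀ z, u z ≤ 1) ∧ (∀ z ∈ C, u z = 1) ∧ u x = 0 := by
  obtain ⟨v, hv0, hv1, hv01⟩ :=
    exists_continuous_zero_one_of_isCompact (isCompact_singleton (x := x)) hC
      (disjoint_singleton_left.mpr hx)
  refine ⟨mkBC ⟨fun z => Real.toNNReal (v z), continuous_real_toNNReal.comp v.continuous⟩ 1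
    (fun z => ?_), fun z => ?_, fun z hz => ?_, ?_⟩
  · simp only [ContinuousMap.coe_mk]
    exact Real.toNNReal_le_one.mpr (hv01 z).2
  · simp only [mkBC_apply, ContinuousMap.coe_mk]
    exact Real.toNNReal_le_one.mpr (hv01 z).2
  · simp only [mkBC_apply, ContinuousMap.coe_mk]
    rw [hv1 hz]
    simp
  · simp only [mkBC_apply, ContinuousMap.coe_mk]
    rw [hv0 rfl]
    simp

/-- dist in ℝ≥0 gives two-sided bounds -/
lemma nn_two_sided {a b ε : ℝ≥0} (h : dist a b < ε) : a ≤ b + ε ∧ b ≤ a + ε := by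
  rw [NNReal.dist_eq] at h
  have h' := abs_sub_lt_iff.1 h
  constructor
  · have : (a : ℝ) ≤ (b : ℝ) + ε := by linarith [h'.1]
    exact_mod_cast this
  · have : (b : ℝ) ≤ (a : ℝ) + ε := by linarith [h'.2]
    exact_mod_cast this


section RMK

variable [CompactSpace Z] [T2Space Z]

/-- compactly supported to bounded -/
noncomputable def ofCc (f : CompactlySupportedContinuousMap Z ℝ≥0) : Z →ᵇ ℝ≥0 :=
  BoundedContinuousFunction.mkOfCompact f.toContinuousMap

@[simp] lemma ofCc_apply (f : CompactlySupportedContinuousMap Z ℝ≥0) (z : Z) :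
    ofCc f z = f z := rfl

/-- bounded to compactly supported -/
noncomputable def toCc (f : Z →ᵇ ℝ≥0) : CompactlySupportedContinuousMap Z ℝ≥0 :=
  CompactlySupportedContinuousMap.continuousMapEquiv f.toContinuousMap

/-- package a state as a linear map -/
noncomputable def stateLM (φ : (Z →ᵇ ℝ≥0) → ℝ≥0) (hφ : IsState φ) :
    CompactlySupportedContinuousMap Z ℝ≥0 →ₗ[ℝ≥0] ℝ≥0 where
  toFun := fun f => φ (ofCc f)
  map_add' := fun f g => by
    rw [← hφ.1]; rfl
  map_smul' := fun c f => by
    show φ (ofCc (c • f)) = c • φ (ofCc f)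
    rw [smul_eq_mul, ← hφ.2.1]; rfl

/-- the Riesz content associated to a state -/
noncomputable def rieszCont (φ : (Z →ᵇ ℝ≥0) → ℝ≥0) (hφ : IsState φ) : Content Z where
  toFun := fun K => rieszContentAux (stateLM φ hφ) K
  mono' := fun K₁ K₂ h => rieszContentAux_mono (stateLM φ hφ) h
  sup_le' := fun K₁ K₂ => rieszContentAux_sup_le (stateLM φ hφ) K₁ K₂
  sup_disjoint' := by
    intro K₁ K₂ hdisj _ _
    refine le_antisymm (rieszContentAux_sup_le (stateLM φ hφ) K₁ K₂) ?_
    refine le_csInf (rieszContentAux_image_nonempty (stateLM φ hφ) (K₁ ⊔ K₂)) ?_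
    rintro _ ⟨f, hf, rfl⟩
    -- Urysohn: v = 0 on K₁, 1 on K₂
    obtain ⟨v, hv0, hv1, hv01⟩ := exists_continuous_zero_one_of_isCompact K₁.isCompact
      K₂.isCompact.isClosed hdisj
    set f₁ : Z →ᵇ ℝ≥0 := mkBC ⟨fun z => f z * Real.toNNReal (1 - v z),
      (map_continuous f).mul (continuous_real_toNNReal.comp
        (continuous_const.sub (map_continuous v)))⟩ (bnd (ofCc f)) (fun z => by
        simp only [ContinuousMap.coe_mk]
        calc f z * Real.toNNReal (1 - v z) ≤ f z * 1 := by
              gcongr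
              exact Real.toNNReal_le_one.mpr (by linarith [(hv01 z).1])
        _ ≤ bnd (ofCc f) := by rw [mul_one]; exact le_bnd (ofCc f) z) with hf₁
    set f₂ : Z →ᵇ ℝ≥0 := mkBC ⟨fun z => f z * Real.toNNReal (v z),
      (map_continuous f).mul (continuous_real_toNNReal.comp (map_continuous v))⟩
      (bnd (ofCc f)) (fun z => by
        simp only [ContinuousMap.coe_mk]
        calc f z * Real.toNNReal (v z) ≤ f z * 1 := by
              gcongr
              exact Real.toNNReal_le_one.mpr (hv01 z).2
        _ ≤ bnd (ofCc f) := by rw [mul_one]; exact le_bnd (ofCc f) z) with hf₂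
    have hsum : f₁ + f₂ = ofCc f := by
      ext z
      rw [BoundedContinuousFunction.add_apply, hf₁, hf₂]
      simp only [mkBC_apply, ContinuousMap.coe_mk, ofCc_apply]
      rw [← mul_add]
      have hkey : Real.toNNReal (1 - v z) + Real.toNNReal (v z) = 1 := by
        have h1 : (0 : ℝ) ≤ 1 - v z := by linarith [(hv01 z).2]
        have h2 : (0 : ℝ) ≤ v z := (hv01 z).1
        apply NNReal.coe_injective
        push_cast
        rw [Real.coe_toNNReal _ h1, Real.coe_toNNReal _ h2]
        ring
      rw [hkey, mul_one]
    have h1 : ∀ x ∈ K₁, (1 : ℝ≥0) ≤ f₁ x := by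
      intro x hx
      rw [hf₁]
      simp only [mkBC_apply, ContinuousMap.coe_mk]
      have : v x = 0 := hv0 hx
      rw [this]
      simpa using hf x (Set.mem_union_left _ hx)
    have h2 : ∀ x ∈ K₂, (1 : ℝ≥0) ≤ f₂ x := by
      intro x hx
      rw [hf₂]
      simp only [mkBC_apply, ContinuousMap.coe_mk]
      have : v x = 1 := hv1 hx
      rw [this]
      simpa using hf x (Set.mem_union_right _ hx)
    calc rieszContentAux (stateLM φ hφ) K₁ + rieszContentAux (stateLM φ hφ) K₂
        ≤ φ f₁ + φ f₂ :=
          add_le_add (rieszContentAux_le (stateLM φ hφ) (f := toCc f₁) h1)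
            (rieszContentAux_le (stateLM φ hφ) (f := toCc f₂) h2)
    _ = φ (f₁ + f₂) := (hφ.1 _ _).symm
    _ = stateLM φ hφ f := by rw [hsum]; rfl

lemma rieszCont_top (φ : (Z →ᵇ ℝ≥0) → ℝ≥0) (hφ : IsState φ) :
    rieszContentAux (stateLM φ hφ) ⊤ = 1 := by
  refine le_antisymm ?_ ?_
  · have := rieszContentAux_le (stateLM φ hφ) (K := ⊤) (f := toCc 1) (fun x _ => le_rfl)
    calc rieszContentAux (stateLM φ hφ) ⊤ ≤ φ 1 := this
    _ = 1 := hφ.2.2.1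
  · refine le_csInf (rieszContentAux_image_nonempty (stateLM φ hφ) ⊤) ?_
    rintro _ ⟨f, hf, rfl⟩
    have : (1 : ℝ≥0) = φ 1 := hφ.2.2.1.symm
    rw [this]
    exact hφ.2.2.2 1 (ofCc f) (fun z => hf z trivial)

lemma rieszMeasure_univ (φ : (Z →ᵇ ℝ≥0) → ℝ≥0) (hφ : IsState φ) :
    (rieszCont φ hφ).measure Set.univ = 1 := by
  rw [Content.measure_apply _ MeasurableSet.univ,
    Content.outerMeasure_of_isOpen _ _ isOpen_univ]
  refine le_antisymm ?_ ?_
  · refine iSup₂_le fun K _ => ?_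
    have : rieszContentAux (stateLM φ hφ) K ≤ 1 := by
      rw [← rieszCont_top φ hφ]
      exact rieszContentAux_mono (stateLM φ hφ) le_top
    show ((rieszContentAux (stateLM φ hφ) K : ℝ≥0) : ℝ≥0∞) ≤ 1
    exact_mod_cast this
  · have := (rieszCont φ hφ).le_innerContent ⊤ ⟨Set.univ, isOpen_univ⟩ (Set.subset_univ _)
    calc (1 : ℝ≥0∞) = ((rieszContentAux (stateLM φ hφ) ⊤ : ℝ≥0) : ℝ≥0∞) := by
          rw [rieszCont_top φ hφ]; rfl
    _ ≤ _ := this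

lemma rieszCont_le_measure_of_isOpen (φ : (Z →ᵇ ℝ≥0) → ℝ≥0) (hφ : IsState φ)
    {U : Set Z} (hU : IsOpen U) {h : Z →ᵇ ℝ≥0}
    (hh1 : ∀ z, h z ≤ 1) (hsupp : tsupport ⇑h ⊆ U) :
    (φ h : ℝ≥0∞) ≤ (rieszCont φ hφ).measure U := by
  have hK : IsCompact (tsupport ⇑h) := (isClosed_tsupport ⇑h).isCompact
  set K : Compacts Z := ⟨tsupport ⇑h, hK⟩ with hKdef
  have step1 : φ h ≤ rieszContentAux (stateLM φ hφ) K := by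
    refine le_csInf (rieszContentAux_image_nonempty _ K) ?_
    rintro _ ⟨g, hg, rfl⟩
    refine hφ.2.2.2 h (ofCc g) fun z => ?_
    by_cases hz : z ∈ tsupport ⇑h
    · exact (hh1 z).trans (hg z hz)
    · rw [image_eq_zero_of_notMem_tsupport hz]
      exact zero_le
  calc ((φ h : ℝ≥0) : ℝ≥0∞) ≤ ((rieszContentAux (stateLM φ hφ) K : ℝ≥0) : ℝ≥0∞) := by
        exact_mod_cast step1
  _ ≤ (rieszCont φ hφ).innerContent ⟨U, hU⟩ := (rieszCont φ hφ).le_innerContent K _ hsupp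
  _ = (rieszCont φ hφ).measure U := by
      rw [Content.measure_apply _ hU.measurableSet, Content.outerMeasure_of_isOpen _ _ hU]

lemma le_lintegral_rieszMeasure (φ : (Z →ᵇ ℝ≥0) → ℝ≥0) (hφ : IsState φ) (f : Z →ᵇ ℝ≥0) :
    (φ f : ℝ≥0∞) ≤ ∫⁻ z, (f z : ℝ≥0∞) ∂(rieszCont φ hφ).measure := by
  classical
  set μ₀ := (rieszCont φ hφ).measure with hμ₀
  haveI hfin : IsFiniteMeasure μ₀ := ⟨by rw [hμ₀, rieszMeasure_univ]; exact one_lt_top⟩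
  set M := bnd f with hM
  have main : ∀ δ : ℝ≥0, 0 < δ → δ ≤ 1 →
      (φ f : ℝ≥0∞) ≤ (∫⁻ z, (f z : ℝ≥0∞) ∂μ₀) + ((M + 3) * δ : ℝ≥0) := by
    intro δ hδ hδ1
    set m := ⌈(M / δ : ℝ≥0)⌉₊ + 1 with hm
    have hm0 : (m : ℝ≥0) ≠ 0 := by positivity
    have hmδ : M < (m : ℝ≥0) * δ := by
      have h1 : M / δ ≤ (⌈(M / δ : ℝ≥0)⌉₊ : ℝ≥0) := Nat.le_ceil _
      have h2 : M ≤ (⌈(M / δ : ℝ≥0)⌉₊ : ℝ≥0) * δ := by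
        rw [← div_le_iff₀ hδ]
        exact h1
      refine h2.trans_lt ?_
      rw [hm]
      push_cast
      exact mul_lt_mul_of_pos_right (lt_add_one _) hδ
    have hmδM : (m : ℝ≥0) * δ ≤ M + 2 * δ := by
      rw [hm]
      push_cast
      have h1 : (⌈(M / δ : ℝ≥0)⌉₊ : ℝ≥0) < M / δ + 1 := Nat.ceil_lt_add_one (zero_le)
      calc ((⌈(M / δ : ℝ≥0)⌉₊ : ℝ≥0) + 1) * δ ≤ (M / δ + 1 + 1) * δ :=
            mul_le_mul_of_nonneg_right (add_le_add_left h1.le 1) (zero_le)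
      _ = (M / δ) * δ + 2 * δ := by ring
      _ = M + 2 * δ := by rw [div_mul_cancel₀ _ hδ.ne']
    -- the slices
    set E : ℕ → Set Z := fun i => (fun z => f z) ⁻¹' Set.Ico ((i : ℝ≥0) * δ) ((i + 1 : ℝ≥0) * δ)
      with hE
    have hEmeas : ∀ i, MeasurableSet (E i) :=
      fun i => (map_continuous f).measurable measurableSet_Ico
    have hEdisj : ∀ i k : ℕ, i ≠ k → Disjoint (E i) (E k) := by
      intro i k hik
      refine Set.disjoint_left.mpr fun z hzi hzk => ?_
      rw [hE, Set.mem_preimage, Set.mem_Ico] at hzi hzk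
      rcases lt_or_gt_of_ne hik with hlt | hlt
      · have : ((i : ℝ≥0) + 1) * δ ≤ (k : ℝ≥0) * δ := by
          gcongr
          exact_mod_cast Nat.succ_le_of_lt hlt
        exact absurd (hzi.2.trans_le (this.trans hzk.1)) (lt_irrefl _)
      · have : ((k : ℝ≥0) + 1) * δ ≤ (i : ℝ≥0) * δ := by
          gcongr
          exact_mod_cast Nat.succ_le_of_lt hlt
        exact absurd (hzk.2.trans_le (this.trans hzi.1)) (lt_irrefl _)
    have hmem : ∀ z, ∃ i, i < m ∧ z ∈ E i := by
      intro z
      have hfloor_le : (⌊(f z / δ : ℝ≥0)⌋₊ : ℝ≥0) * δ ≤ f z := by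
        rw [← le_div_iff₀ hδ]
        exact Nat.floor_le (zero_le)
      refine ⟨⌊(f z / δ : ℝ≥0)⌋₊, ?_, ?_⟩
      · have h2 : (⌊(f z / δ : ℝ≥0)⌋₊ : ℝ≥0) * δ < (m : ℝ≥0) * δ :=
          lt_of_le_of_lt (hfloor_le.trans (le_bnd f z)) hmδ
        have h3 : (⌊(f z / δ : ℝ≥0)⌋₊ : ℝ≥0) < (m : ℝ≥0) := lt_of_mul_lt_mul_right h2 (zero_le)
        exact_mod_cast h3
      · rw [hE, Set.mem_preimage, Set.mem_Ico]
        refine ⟨hfloor_le, ?_⟩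
        have h4 : (f z / δ : ℝ≥0) < ⌊(f z / δ : ℝ≥0)⌋₊ + 1 := Nat.lt_floor_add_one _
        rw [← div_lt_iff₀ hδ]
        exact h4
    -- choose open neighborhoods
    have hex : ∀ i : ℕ, ∃ U : Set Z, E i ⊆ U ∧ IsOpen U ∧ μ₀ U ≤ μ₀ (E i) + ((δ / m : ℝ≥0) : ℝ≥0∞)
        ∧ ∀ z ∈ U, f z < ((i : ℝ≥0) + 1) * δ := by
      intro i
      have hdm0 : (δ / m : ℝ≥0) ≠ 0 := by positivity
      have hlt : μ₀ (E i) < μ₀ (E i) + ((δ / m : ℝ≥0) : ℝ≥0∞) :=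
        ENNReal.lt_add_right (measure_ne_top μ₀ _) (by exact_mod_cast hdm0)
      obtain ⟨V, hEV, hVopen, hVlt⟩ := Set.exists_isOpen_lt_of_lt (E i) _ hlt
      refine ⟨V ∩ (fun z => f z) ⁻¹' Set.Iio (((i : ℝ≥0) + 1) * δ), fun z hz => ?_,
        hVopen.inter (IsOpen.preimage (map_continuous f) isOpen_Iio), ?_, ?_⟩
      · have hz' := hz
        rw [hE, Set.mem_preimage, Set.mem_Ico] at hz'
        exact ⟨hEV hz, hz'.2⟩
      · exact (measure_mono Set.inter_subset_left).trans hVlt.le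
      · rintro z ⟨-, hz⟩
        exact hz
    choose U hUE hUopen hUμ hUlt using hex
    -- partition of unity
    have hcover : (Set.univ : Set Z) ⊆ ⋃ i : Fin m, U i := by
      intro z _
      obtain ⟨i, him, hzi⟩ := hmem z
      exact Set.mem_iUnion.mpr ⟨⟨i, him⟩, hUE i hzi⟩
    obtain ⟨h, hsupp, hsum1, h01, -⟩ := exists_continuous_sum_one_of_isOpen_isCompact
      (fun i : Fin m => hUopen i) isCompact_univ hcover
    set hN : Fin m → (Z →ᵇ ℝ≥0) := fun i => mkBC ⟨fun z => Real.toNNReal (h i z),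
      continuous_real_toNNReal.comp (map_continuous (h i))⟩ 1
      (fun z => Real.toNNReal_le_one.mpr (h01 i z).2) with hhN
    have hN1 : ∀ i z, hN i z ≤ 1 := by
      intro i z
      show Real.toNNReal (h i z) ≤ 1
      exact Real.toNNReal_le_one.mpr (h01 i z).2
    have hNsupp : ∀ i, tsupport ⇑(hN i) ⊆ U i := by
      intro i
      refine (closure_mono ?_).trans (hsupp i)
      intro z hz
      rw [Function.mem_support] at hz ⊢
      intro hc
      exact hz (by show Real.toNNReal (h i z) = 0; rw [hc]; simp)
    have hNsum : ∀ z, ∑ i : Fin m, hN i z = 1 := by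
      intro z
      have hz' : ∑ i : Fin m, h i z = 1 := by
        have := hsum1 (Set.mem_univ z)
        rwa [Finset.sum_apply, Pi.one_apply] at this
      have hcoe : ∀ i : Fin m, ((hN i z : ℝ≥0) : ℝ) = h i z := fun i =>
        Real.coe_toNNReal _ (h01 i z).1
      apply NNReal.coe_injective
      push_cast
      rw [Finset.sum_congr rfl (fun i _ => hcoe i)]
      exact hz'
    have hfle : ∀ z, f z ≤ ∑ i : Fin m, (((i : ℕ) + 1 : ℝ≥0) * δ) * hN i z := by
      intro z
      calc f z = f z * ∑ i : Fin m, hN i z := by rw [hNsum z, mul_one]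
      _ = ∑ i : Fin m, f z * hN i z := Finset.mul_sum _ _ _
      _ ≤ ∑ i : Fin m, (((i : ℕ) + 1 : ℝ≥0) * δ) * hN i z := by
          refine Finset.sum_le_sum fun i _ => ?_
          by_cases hz : hN i z = 0
          · rw [hz, mul_zero, mul_zero]
          · have hzU : z ∈ U i := hNsupp i (subset_closure (Function.mem_support.mpr hz))
            have := (hUlt i z hzU).le
            exact mul_le_mul_of_nonneg_right (by exact_mod_cast this) (zero_le)
    have hφle : φ f ≤ ∑ i : Fin m, (((i : ℕ) + 1 : ℝ≥0) * δ) * φ (hN i) := by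
      have hle : φ f ≤ φ (∑ i : Fin m, (((i : ℕ) + 1 : ℝ≥0) * δ) • hN i) := by
        refine hφ.2.2.2 _ _ fun z => ?_
        refine (hfle z).trans (le_of_eq ?_)
        rw [BoundedContinuousFunction.coe_sum]
        rw [Finset.sum_apply]
        simp
      refine hle.trans (le_of_eq ?_)
      rw [hφ.finsum]
      exact Finset.sum_congr rfl fun i _ => hφ.2.1 _ _
    have hNμ : ∀ i : Fin m, (φ (hN i) : ℝ≥0∞) ≤ μ₀ (U i) := fun i =>
      rieszCont_le_measure_of_isOpen φ hφ (hUopen i) (hN1 i) (hNsupp i)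
    -- lower Riemann sum is below the integral
    have hlower : ∑ i : Fin m, (((i : ℕ) : ℝ≥0) * δ : ℝ≥0∞) * μ₀ (E i)
        ≤ ∫⁻ z, (f z : ℝ≥0∞) ∂μ₀ := by
      have heq : ∫⁻ z, (∑ i : Fin m,
            (E i).indicator (fun _ => (((i : ℕ) : ℝ≥0) * δ : ℝ≥0∞)) z) ∂μ₀
          = ∑ i : Fin m, (((i : ℕ) : ℝ≥0) * δ : ℝ≥0∞) * μ₀ (E i) := by
        rw [lintegral_finset_sum (Finset.univ)
          (f := fun (i : Fin m) z => (E i).indicator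
            (fun _ => (((i : ℕ) : ℝ≥0) * δ : ℝ≥0∞)) z)
          (fun i _ => measurable_const.indicator (hEmeas i))]
        refine Finset.sum_congr rfl fun i _ => ?_
        exact lintegral_indicator_const (hEmeas i) _
      rw [← heq]
      refine lintegral_mono fun z => ?_
      obtain ⟨i₀, hi₀m, hzi₀⟩ := hmem z
      have hsingle : ∑ i : Fin m, (E i).indicator (fun _ => (((i : ℕ) : ℝ≥0) * δ : ℝ≥0∞)) z
          = (((i₀ : ℕ) : ℝ≥0) * δ : ℝ≥0∞) := by
        rw [Finset.sum_eq_single_of_mem (⟨i₀, hi₀m⟩ : Fin m) (Finset.mem_univ _)]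
        · rw [Set.indicator_of_mem hzi₀]
        · intro k _ hk
          refine Set.indicator_of_notMem (fun hzk => ?_) _
          have hkne : (k : ℕ) ≠ i₀ := fun hc => hk (Fin.ext hc)
          exact Set.disjoint_left.mp (hEdisj _ _ hkne) hzk hzi₀
      rw [hsingle]
      rw [hE, Set.mem_preimage, Set.mem_Ico] at hzi₀
      exact ENNReal.coe_le_coe.mpr hzi₀.1
    -- total measure of slices
    have htot : ∑ i : Fin m, μ₀ (E i) ≤ 1 := by
      have hdisjF : Set.PairwiseDisjoint (↑(Finset.univ : Finset (Fin m)))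
          (fun i : Fin m => E i) := by
        intro i _ k _ hik
        exact hEdisj _ _ (fun hc => hik (Fin.ext hc))
      calc ∑ i : Fin m, μ₀ (E i) = μ₀ (⋃ i ∈ (Finset.univ : Finset (Fin m)), E i) :=
            (measure_biUnion_finset hdisjF (fun i _ => hEmeas i)).symm
      _ ≤ μ₀ Set.univ := measure_mono (Set.subset_univ _)
      _ = 1 := by rw [hμ₀, rieszMeasure_univ]
    -- put it together
    calc (φ f : ℝ≥0∞)
        ≤ ((∑ i : Fin m, (((i : ℕ) + 1 : ℝ≥0) * δ) * φ (hN i) : ℝ≥0) : ℝ≥0∞) := by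
          exact_mod_cast hφle
    _ = ∑ i : Fin m, ((((i : ℕ) + 1 : ℝ≥0) * δ : ℝ≥0) : ℝ≥0∞) * (φ (hN i) : ℝ≥0∞) := by
          push_cast
          rfl
    _ ≤ ∑ i : Fin m, ((((i : ℕ) + 1 : ℝ≥0) * δ : ℝ≥0) : ℝ≥0∞) * μ₀ (U i) :=
          Finset.sum_le_sum fun i _ => mul_le_mul_right (hNμ i) _
    _ ≤ ∑ i : Fin m, ((((i : ℕ) + 1 : ℝ≥0) * δ : ℝ≥0) : ℝ≥0∞)
          * (μ₀ (E i) + ((δ / m : ℝ≥0) : ℝ≥0∞)) :=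
          Finset.sum_le_sum fun i _ => mul_le_mul_right (hUμ i) _
    _ = ∑ i : Fin m, ((((i : ℕ) : ℝ≥0) * δ : ℝ≥0∞) * μ₀ (E i) + (δ : ℝ≥0∞) * μ₀ (E i)
          + ((((i : ℕ) + 1 : ℝ≥0) * δ : ℝ≥0) : ℝ≥0∞) * ((δ / m : ℝ≥0) : ℝ≥0∞)) := by
          refine Finset.sum_congr rfl fun i _ => ?_
          rw [mul_add]
          congr 1
          rw [← add_mul]
          congr 1
          push_cast
          ring
    _ = (∑ i : Fin m, (((i : ℕ) : ℝ≥0) * δ : ℝ≥0∞) * μ₀ (E i))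
          + (δ : ℝ≥0∞) * (∑ i : Fin m, μ₀ (E i))
          + ∑ i : Fin m, ((((i : ℕ) + 1 : ℝ≥0) * δ : ℝ≥0) : ℝ≥0∞)
            * ((δ / m : ℝ≥0) : ℝ≥0∞) := by
          rw [Finset.sum_add_distrib, Finset.sum_add_distrib, Finset.mul_sum]
    _ ≤ (∫⁻ z, (f z : ℝ≥0∞) ∂μ₀) + (δ : ℝ≥0∞) * 1 + (((M + 2) * δ : ℝ≥0) : ℝ≥0∞) := by
          refine add_le_add (add_le_add hlower (mul_le_mul_right htot _)) ?_
          have hterm : ∀ i : Fin m, ((((i : ℕ) + 1 : ℝ≥0) * δ : ℝ≥0) : ℝ≥0∞)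
              * ((δ / m : ℝ≥0) : ℝ≥0∞) ≤ (((M + 2 * δ) : ℝ≥0) : ℝ≥0∞)
              * ((δ / m : ℝ≥0) : ℝ≥0∞) := by
            intro i
            refine mul_le_mul_left ?_ _
            have hi1 : ((i : ℕ) + 1 : ℝ≥0) * δ ≤ (m : ℝ≥0) * δ := by
              gcongr
              have := i.isLt
              exact_mod_cast Nat.succ_le_of_lt this
            exact_mod_cast hi1.trans hmδM
          calc ∑ i : Fin m, ((((i : ℕ) + 1 : ℝ≥0) * δ : ℝ≥0) : ℝ≥0∞)
                * ((δ / m : ℝ≥0) : ℝ≥0∞)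
              ≤ ∑ _i : Fin m, (((M + 2 * δ) : ℝ≥0) : ℝ≥0∞) * ((δ / m : ℝ≥0) : ℝ≥0∞) :=
                Finset.sum_le_sum fun i _ => hterm i
          _ = (m : ℝ≥0∞) * ((((M + 2 * δ) : ℝ≥0) : ℝ≥0∞) * ((δ / m : ℝ≥0) : ℝ≥0∞)) := by
                rw [Finset.sum_const, Finset.card_univ, Fintype.card_fin]
                simp [nsmul_eq_mul]
          _ = ((((m : ℝ≥0) * ((M + 2 * δ) * (δ / m)) : ℝ≥0)) : ℝ≥0∞) := by
                push_cast
                ring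
          _ = (((M + 2 * δ) * δ : ℝ≥0) : ℝ≥0∞) := by
                congr 1
                rw [mul_comm (m : ℝ≥0), mul_assoc, div_mul_cancel₀ _ hm0]
          _ ≤ (((M + 2) * δ : ℝ≥0) : ℝ≥0∞) := by
                refine ENNReal.coe_le_coe.mpr ?_
                gcongr
                calc 2 * δ ≤ 2 * 1 := by gcongr
                _ = 2 := mul_one 2
    _ = (∫⁻ z, (f z : ℝ≥0∞) ∂μ₀) + (((M + 3) * δ : ℝ≥0) : ℝ≥0∞) := by
          rw [mul_one, add_assoc]
          congr 1
          push_cast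
          ring
  refine ENNReal.le_of_forall_pos_le_add fun ε hε _ => ?_
  have hM3 : (0 : ℝ≥0) < M + 3 := by positivity
  set δ := min 1 (ε / (M + 3)) with hδdef
  have hδpos : 0 < δ := lt_min one_pos (by positivity)
  have hδ1 : δ ≤ 1 := min_le_left _ _
  refine (main δ hδpos hδ1).trans ?_
  refine add_le_add le_rfl ?_
  refine ENNReal.coe_le_coe.mpr ?_
  calc (M + 3) * δ ≤ (M + 3) * (ε / (M + 3)) := by
        gcongr
        exact min_le_right _ _
  _ = ε := by
        rw [mul_comm, div_mul_cancel₀ _ hM3.ne']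

lemma lintegral_rieszMeasure (φ : (Z →ᵇ ℝ≥0) → ℝ≥0) (hφ : IsState φ) (f : Z →ᵇ ℝ≥0) :
    ∫⁻ z, (f z : ℝ≥0∞) ∂(rieszCont φ hφ).measure = (φ f : ℝ≥0∞) := by
  set μ₀ := (rieszCont φ hφ).measure with hμ₀
  set M := bnd f with hM
  set fc : Z →ᵇ ℝ≥0 := mkBC ⟨fun z => M - f z, continuous_const.sub (map_continuous f)⟩ M
    (fun z => tsub_le_self) with hfc
  have hfcapp : ∀ z, fc z = M - f z := fun z => rfl
  have hsum : ∀ z, (f z : ℝ≥0∞) + (fc z : ℝ≥0∞) = (M : ℝ≥0∞) := by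
    intro z
    rw [hfcapp]
    rw [← ENNReal.coe_add]
    congr 1
    exact add_tsub_cancel_of_le (le_bnd f z)
  have hφsum : φ f + φ fc = M := by
    have h1 : f + fc = BoundedContinuousFunction.const Z M := by
      refine BoundedContinuousFunction.ext fun z => ?_
      rw [BoundedContinuousFunction.add_apply, hfcapp, BoundedContinuousFunction.const_apply]
      exact add_tsub_cancel_of_le (le_bnd f z)
    rw [← hφ.1, h1, hφ.const]
  have hintsum : (∫⁻ z, (f z : ℝ≥0∞) ∂μ₀) + (∫⁻ z, (fc z : ℝ≥0∞) ∂μ₀) = (M : ℝ≥0∞) := by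
    rw [← lintegral_add_left ((map_continuous f).measurable.coe_nnreal_ennreal)]
    have : ∀ z, (f z : ℝ≥0∞) + (fc z : ℝ≥0∞) = (M : ℝ≥0∞) := hsum
    rw [lintegral_congr this, lintegral_const]
    rw [hμ₀, rieszMeasure_univ, mul_one]
  haveI hfinm : IsFiniteMeasure μ₀ := ⟨by rw [hμ₀, rieszMeasure_univ]; exact one_lt_top⟩
  have h1 := le_lintegral_rieszMeasure φ hφ f
  have h2 := le_lintegral_rieszMeasure φ hφ fc
  refine le_antisymm ?_ h1
  have hle : (∫⁻ z, (f z : ℝ≥0∞) ∂μ₀) + (φ fc : ℝ≥0∞) ≤ (φ f : ℝ≥0∞) + (φ fc : ℝ≥0∞) := by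
    calc (∫⁻ z, (f z : ℝ≥0∞) ∂μ₀) + (φ fc : ℝ≥0∞)
        ≤ (∫⁻ z, (f z : ℝ≥0∞) ∂μ₀) + (∫⁻ z, (fc z : ℝ≥0∞) ∂μ₀) := add_le_add le_rfl h2
    _ = (M : ℝ≥0∞) := hintsum
    _ = ((φ f + φ fc : ℝ≥0) : ℝ≥0∞) := by rw [hφsum]
    _ = (φ f : ℝ≥0∞) + (φ fc : ℝ≥0∞) := by push_cast; rfl
  have hfc_ne : (φ fc : ℝ≥0∞) ≠ ⊤ := ENNReal.coe_ne_top
  exact (ENNReal.add_le_add_iff_right hfc_ne).mp hle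

end RMK

/-- Riesz-Markov-Kakutani: every state comes from a Borel probability measure. -/
theorem exists_tst_eq_of_isState [CompactSpace Z] [T2Space Z]
    (φ : (Z →ᵇ ℝ≥0) → ℝ≥0) (hφ : IsState φ) :
    ∃ μ : ProbabilityMeasure Z, tst μ = φ := by
  refine ⟨(⟨(rieszCont φ hφ).measure, ⟨rieszMeasure_univ φ hφ⟩⟩ : ProbabilityMeasure Z), ?_⟩
  funext f
  show (∫⁻ z, (f z : ℝ≥0∞) ∂(rieszCont φ hφ).measure).toNNReal = φ f
  rw [lintegral_rieszMeasure φ hφ f]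
  simp

section Dyn2

variable {G : Type*} [Group G] [MulAction G Z] [ContinuousConstSMul G Z]

/-- any nonempty closed invariant set of states contains all Dirac functionals -/
lemma diracFn_mem_of_closed_invariant [CompactSpace Z] [T2Space Z]
    (hmin : IsMinimalAction G Z) (hprox : IsStronglyProximal G Z)
    (L : Set ((Z →ᵇ ℝ≥0) → ℝ≥0)) (hne : L.Nonempty) (hcl : IsClosed L)
    (hst : ∀ ψ ∈ L, IsState ψ)
    (hinv : ∀ (g : G), ∀ ψ ∈ L, compW (smulCM G g) ψ ∈ L) (x : Z) :
    diracFn x ∈ L := by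
  obtain ⟨ψ, hψ⟩ := hne
  obtain ⟨ν, hν⟩ := exists_tst_eq_of_isState ψ (hst ψ hψ)
  have h1 : diracFn x ∈ closure (orbW G (tst ν)) :=
    diracFn_mem_closure_orbW hmin hprox ν x
  have h2 : orbW G (tst ν) ⊆ L := by
    rintro _ ⟨g, rfl⟩
    rw [hν]
    exact hinv g ψ hψ
  exact (closure_minimal h2 hcl) h1

end Dyn2


end SPP

/-- A product of `G`-boundaries, with the product topology and the diagonal action
(and the Borel σ-algebra of the product topology), is strongly proximal. -/
theorem isStronglyProximal_pi
    {G : Type*} {J : Type*} {Y : J → Type*} [Group G]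
    [∀ j, TopologicalSpace (Y j)] [∀ j, CompactSpace (Y j)] [∀ j, T2Space (Y j)]
    [∀ j, Nonempty (Y j)] [∀ j, MeasurableSpace (Y j)] [∀ j, BorelSpace (Y j)]
    [∀ j, MulAction G (Y j)] [∀ j, ContinuousConstSMul G (Y j)]
    [MeasurableSpace (∀ j, Y j)] [BorelSpace (∀ j, Y j)]
    (hmin : ∀ j, IsMinimalAction G (Y j)) (hprox : ∀ j, IsStronglyProximal G (Y j)) :
    IsStronglyProximal G (∀ j, Y j) := by
  classical
  intro μ
  set A : Set (ProbabilityMeasure (∀ j, Y j)) := {ν | ∃ g : G, ν = pushforwardProb g μ} with hA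
  have hAorb : SPP.tst '' A = SPP.orbW G (SPP.tst μ) := by
    ext ψ
    constructor
    · rintro ⟨ν, ⟨g, rfl⟩, rfl⟩
      exact ⟨g, SPP.tst_push g μ⟩
    · rintro ⟨g, rfl⟩
      exact ⟨pushforwardProb g μ, ⟨g, rfl⟩, SPP.tst_push g μ⟩
  set K : Set (((∀ j, Y j) →ᵇ ℝ≥0) → ℝ≥0) := closure (SPP.orbW G (SPP.tst μ)) with hK
  -- basic properties of K
  have horbstate : ∀ ψ ∈ SPP.orbW G (SPP.tst μ), SPP.IsState ψ := by
    rintro _ ⟨g, rfl⟩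
    rw [← SPP.tst_push g μ]
    exact SPP.isState_tst _
  have hKstate : ∀ ψ ∈ K, SPP.IsState ψ := fun ψ hψ =>
    closure_minimal horbstate SPP.isClosed_isState hψ
  have hKsub : K ⊆ {φ | ∀ f, φ f ∈ Set.Icc 0 (SPP.bnd f)} := by
    refine closure_minimal (fun ψ hψ f => ?_) ?_
    · exact ⟨zero_le, (horbstate ψ hψ).apply_le_bnd f⟩
    · have : {φ : (((∀ j, Y j) →ᵇ ℝ≥0)) → ℝ≥0 | ∀ f, φ f ∈ Set.Icc 0 (SPP.bnd f)}
          = Set.pi Set.univ (fun f => Set.Icc 0 (SPP.bnd f)) := by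
        ext φ
        exact ⟨fun h f _ => h f, fun h f => h f trivial⟩
      rw [this]
      exact isClosed_set_pi fun f _ => isClosed_Icc
  have hKcomp : IsCompact K := SPP.isCompact_box.of_isClosed_subset isClosed_closure hKsub
  have hKne : K.Nonempty :=
    ⟨SPP.tst μ, subset_closure ⟨1, by rw [SPP.compW_smul_one]⟩⟩
  have hKinv : ∀ (g : G), ∀ ψ ∈ K, SPP.compW (SPP.smulCM G g) ψ ∈ K := fun g ψ hψ =>
    SPP.closure_orbW_maps g (SPP.tst μ) hψ
  -- coordinate projections
  let πC : ∀ j, C((∀ k, Y k), Y j) := fun j => ⟨fun z => z j, continuous_apply j⟩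
  -- commutation of projection with the action
  have hcomm : ∀ (g : G) (j : J) (φ : (((∀ k, Y k) →ᵇ ℝ≥0)) → ℝ≥0),
      SPP.compW (SPP.smulCM G g) (SPP.compW (πC j) φ)
        = SPP.compW (πC j) (SPP.compW (SPP.smulCM G g) φ) := by
    intro g j φ
    funext f
    show φ ((f.compContinuous (SPP.smulCM G g)).compContinuous (πC j))
      = φ ((f.compContinuous (πC j)).compContinuous (SPP.smulCM G g))
    rfl
  -- the finite induction
  have key : ∀ s : Finset J, ∃ φ ∈ K, ∀ j ∈ s, ∃ x : Y j,
      SPP.compW (πC j) φ = SPP.diracFn x := by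
    intro s
    induction s using Finset.induction_on with
    | empty =>
      obtain ⟨φ₀, hφ₀⟩ := hKne
      exact ⟨φ₀, hφ₀, fun j hj => absurd hj (Finset.notMem_empty j)⟩
    | @insert j₀ s hj₀ ih =>
      obtain ⟨φ, hφK, hφs⟩ := ih
      set C : Set (((∀ k, Y k) →ᵇ ℝ≥0) → ℝ≥0) := closure (SPP.orbW G φ) with hC
      have hCsubK : C ⊆ K := closure_minimal
        (by rintro _ ⟨g, rfl⟩; exact hKinv g φ hφK) isClosed_closure
      have hCcomp : IsCompact C := hKcomp.of_isClosed_subset isClosed_closure hCsubK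
      have hCne : C.Nonempty := ⟨φ, subset_closure ⟨1, by rw [SPP.compW_smul_one]⟩⟩
      have hCinv : ∀ (g : G), ∀ ψ ∈ C, SPP.compW (SPP.smulCM G g) ψ ∈ C := fun g ψ hψ =>
        SPP.closure_orbW_maps g φ hψ
      set L : Set ((Y j₀ →ᵇ ℝ≥0) → ℝ≥0) := SPP.compW (πC j₀) '' C with hL
      have hLne : L.Nonempty := hCne.image _
      have hLcl : IsClosed L := (hCcomp.image (SPP.continuous_compW _)).isClosed
      have hLst : ∀ ψ ∈ L, SPP.IsState ψ := by
        rintro _ ⟨ψ, hψ, rfl⟩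
        exact (hKstate ψ (hCsubK hψ)).compW_state _
      have hLinv : ∀ (g : G), ∀ ψ ∈ L, SPP.compW (SPP.smulCM G g) ψ ∈ L := by
        rintro g _ ⟨ψ, hψ, rfl⟩
        rw [hcomm]
        exact Set.mem_image_of_mem _ (hCinv g ψ hψ)
      obtain ⟨φ', hφ'C, hφ'd⟩ : ∃ φ' ∈ C, SPP.compW (πC j₀) φ'
          = SPP.diracFn (Classical.arbitrary (Y j₀)) := by
        have := SPP.diracFn_mem_of_closed_invariant (hmin j₀) (hprox j₀) L hLne hLcl hLst hLinv
          (Classical.arbitrary (Y j₀))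
        obtain ⟨ψ, hψ, heq⟩ := this
        exact ⟨ψ, hψ, heq⟩
      refine ⟨φ', hCsubK hφ'C, fun j hj => ?_⟩
      rcases Finset.mem_insert.mp hj with rfl | hjs
      · exact ⟨_, hφ'd⟩
      · obtain ⟨xj, hxj⟩ := hφs j hjs
        have h5 : SPP.compW (πC j) '' (SPP.orbW G φ) ⊆ Set.range SPP.diracFn := by
          rintro _ ⟨_, ⟨g, rfl⟩, rfl⟩
          rw [← hcomm, hxj, SPP.compW_diracFn]
          exact Set.mem_range_self _
        have h6 : SPP.compW (πC j) φ' ∈ closure (SPP.compW (πC j) '' (SPP.orbW G φ)) :=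
          (image_closure_subset_closure_image (SPP.continuous_compW _))
            (Set.mem_image_of_mem _ hφ'C)
        have h7 : SPP.compW (πC j) φ' ∈ Set.range SPP.diracFn :=
          (closure_minimal h5 SPP.isClosed_diracSet) h6
        obtain ⟨x, hx⟩ := h7
        exact ⟨x, hx.symm⟩
  -- infinite intersection via compactness
  set As : Finset J → Set (((∀ k, Y k) →ᵇ ℝ≥0) → ℝ≥0) := fun s =>
    K ∩ ⋂ j ∈ s, (SPP.compW (πC j)) ⁻¹' (Set.range SPP.diracFn) with hAs
  have hAscl : ∀ s, IsClosed (As s) := fun s =>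
    isClosed_closure.inter (isClosed_biInter fun j _ =>
      SPP.isClosed_diracSet.preimage (SPP.continuous_compW _))
  have hAsne : ∀ s, (As s).Nonempty := by
    intro s
    obtain ⟨φ, hφK, hφs⟩ := key s
    refine ⟨φ, hφK, Set.mem_iInter₂.mpr fun j hj => ?_⟩
    obtain ⟨x, hx⟩ := hφs j hj
    exact ⟨x, hx.symm⟩
  have hAscomp : ∀ s, IsCompact (As s) := fun s =>
    hKcomp.of_isClosed_subset (hAscl s) Set.inter_subset_left
  have hAsdir : Directed (· ⊇ ·) As := by
    intro s t
    refine ⟨s ∪ t, ?_, ?_⟩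
    · refine Set.inter_subset_inter le_rfl ?_
      exact Set.biInter_subset_biInter_left (fun j hj => Finset.mem_union_left t hj)
    · refine Set.inter_subset_inter le_rfl ?_
      exact Set.biInter_subset_biInter_left (fun j hj => Finset.mem_union_right s hj)
  obtain ⟨φs, hφs⟩ := IsCompact.nonempty_iInter_of_directed_nonempty_isCompact_isClosed
    As hAsdir hAsne hAscomp hAscl
  have hφsK : φs ∈ K := (Set.mem_iInter.mp hφs ∅).1
  have hφsd : ∀ j, ∃ x : Y j, SPP.compW (πC j) φs = SPP.diracFn x := by
    intro j
    have := (Set.mem_iInter.mp hφs {j}).2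
    rw [Set.mem_iInter₂] at this
    obtain ⟨x, hx⟩ := this j (Finset.mem_singleton_self j)
    exact ⟨x, hx.symm⟩
  choose x hx using hφsd
  have hst : SPP.IsState φs := hKstate _ hφsK
  -- final identification: φs is the Dirac functional at x
  have hfinal : ∀ F : (∀ k, Y k) →ᵇ ℝ≥0, φs F = F x := by
    intro F
    have main : ∀ ε : ℝ≥0, 0 < ε → φs F ≤ F x + ε ∧ F x ≤ φs F + ε := by
      intro ε hε
      have hV : IsOpen (⇑F ⁻¹' Metric.ball (F x) ε) :=
        F.continuous.isOpen_preimage _ Metric.isOpen_ball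
      have hxV : x ∈ ⇑F ⁻¹' Metric.ball (F x) ε := by
        refine Set.mem_preimage.mpr (Metric.mem_ball_self ?_)
        exact_mod_cast hε
      obtain ⟨I, u, hIu, hpi⟩ := isOpen_pi_iff.mp hV x hxV
      have hU : ∀ j ∈ I, ∃ uj : Y j →ᵇ ℝ≥0, (∀ z, uj z ≤ 1)
          ∧ (∀ z ∈ (u j)ᶜ, uj z = 1) ∧ uj (x j) = 0 := by
        intro j hj
        obtain ⟨uj, h1, h2, h3⟩ := SPP.exists_urysohn_nn (u j)ᶜ (hIu j hj).1.isClosed_compl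
          (x j) (by simp [(hIu j hj).2])
        exact ⟨uj, h1, fun z hz => h2 z hz, h3⟩
      choose! uB hB1 hBC hB0 using hU
      set utot : (∀ k, Y k) →ᵇ ℝ≥0 := ∑ j ∈ I, (uB j).compContinuous (πC j) with hutot
      have hutot_apply : ∀ z, utot z = ∑ j ∈ I, uB j (z j) := by
        intro z
        rw [hutot]
        simp [BoundedContinuousFunction.coe_sum, πC]
      have hφu : φs utot = 0 := by
        rw [hutot, hst.finsum]
        refine Finset.sum_eq_zero fun j hj => ?_
        show SPP.compW (πC j) φs (uB j) = 0
        rw [hx j]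
        exact hB0 j hj
      set CF := SPP.bnd F with hCF
      -- big-term lower bound off the basic open set
      have hout : ∀ z, z ∉ (I : Set J).pi u → (1 : ℝ≥0) ≤ utot z := by
        intro z hz
        rw [Set.mem_pi] at hz
        push_neg at hz
        obtain ⟨j, hjI, hju⟩ := hz
        rw [hutot_apply]
        calc (1 : ℝ≥0) = uB j (z j) := (hBC j hjI (z j) hju).symm
        _ ≤ ∑ j ∈ I, uB j (z j) :=
              Finset.single_le_sum (f := fun k => uB k (z k)) (fun k _ => zero_le) hjI
      have hb1 : ∀ z, F z ≤ (BoundedContinuousFunction.const (∀ k, Y k) (F x + ε)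
          + CF • utot) z := by
        intro z
        simp only [BoundedContinuousFunction.coe_add, BoundedContinuousFunction.coe_smul,
          BoundedContinuousFunction.const_apply, Pi.add_apply, Pi.smul_apply, smul_eq_mul]
        by_cases hz : z ∈ (I : Set J).pi u
        · have := hpi hz
          rw [Set.mem_preimage] at this
          have h2 := (SPP.nn_two_sided (Metric.mem_ball.mp this)).1
          exact h2.trans le_self_add
        · calc F z ≤ CF := SPP.le_bnd F z
          _ = CF * 1 := (mul_one _).symm
          _ ≤ CF * utot z := by gcongr; exact hout z hz
          _ ≤ _ := le_add_self
      have hb2 : ∀ z, (BoundedContinuousFunction.const (∀ k, Y k) (F x)) z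
          ≤ (F + (BoundedContinuousFunction.const (∀ k, Y k) ε + CF • utot)) z := by
        intro z
        simp only [BoundedContinuousFunction.coe_add, BoundedContinuousFunction.coe_smul,
          BoundedContinuousFunction.const_apply, Pi.add_apply, Pi.smul_apply, smul_eq_mul]
        by_cases hz : z ∈ (I : Set J).pi u
        · have := hpi hz
          rw [Set.mem_preimage] at this
          have h2 := (SPP.nn_two_sided (Metric.mem_ball.mp this)).2
          calc F x ≤ F z + ε := h2
          _ ≤ F z + (ε + CF * utot z) := by rw [← add_assoc]; exact le_self_add
        · calc F x ≤ CF := SPP.le_bnd F x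
          _ = CF * 1 := (mul_one _).symm
          _ ≤ CF * utot z := by gcongr; exact hout z hz
          _ ≤ _ := by
            calc CF * utot z ≤ ε + CF * utot z := le_add_self
            _ ≤ F z + (ε + CF * utot z) := le_add_self
      constructor
      · calc φs F ≤ φs (BoundedContinuousFunction.const (∀ k, Y k) (F x + ε) + CF • utot) :=
              hst.2.2.2 _ _ hb1
        _ = (F x + ε) + φs (CF • utot) := by rw [hst.1, hst.const]
        _ = (F x + ε) + CF * φs utot := by rw [hst.2.1]
        _ = F x + ε := by rw [hφu, mul_zero, add_zero]
      · calc F x = φs (BoundedContinuousFunction.const (∀ k, Y k) (F x)) := (hst.const _).symm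
        _ ≤ φs (F + (BoundedContinuousFunction.const (∀ k, Y k) ε + CF • utot)) :=
              hst.2.2.2 _ _ hb2
        _ = φs F + (φs (BoundedContinuousFunction.const (∀ k, Y k) ε) + φs (CF • utot)) := by
              rw [hst.1, hst.1]
        _ = φs F + (ε + CF * φs utot) := by rw [hst.const, hst.2.1]
        _ = φs F + ε := by rw [hφu, mul_zero, add_zero]
    refine le_antisymm ?_ ?_
    · exact _root_.le_of_forall_pos_le_add fun ε hε => (main ε hε).1
    · exact _root_.le_of_forall_pos_le_add fun ε hε => (main ε hε).2
  -- conclude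
  refine ⟨x, ?_⟩
  have htd : SPP.tst (diracProb x) = φs := by
    rw [SPP.tst_dirac]
    funext F
    exact (hfinal F).symm
  have hmem : SPP.tst (diracProb x) ∈ closure (SPP.tst '' A) := by
    rw [hAorb, htd]
    exact hφsK
  have hcl := SPP.inducing_tst.closure_eq_preimage_closure_image A
  show diracProb x ∈ closure A
  rw [hcl]
  exact hmem
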